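/- Let N ≥ 1, d ≥ 1, and let χ : {0,1,…,N} → ℕ satisfy χ(0) = χ(N) = 1 and χ(i) ≥ 1. For each site i = 1,…,N let A^{[i]} : Fin d → Matrix (Fin χ(i−1)) (Fin χ(i)) ℂ be an arbitrary family of matrices, and for each interior bond i = 1,…,N−1 let P_i ∈ Matrix (Fin χ(i)) (Fin χ(i)) ℂ be Hermitian. Define Φ : (Fin N → Fin d) → ℂ by Φ(σ) = the unique entry of A^{[1]σ(1)} P_1 A^{[2]σ(2)} P_2 ⋯ P_{N−1} A^{[N]σ(N)}, and define matrices Y^{[i]} ∈ Matrix (Fin χ(i−1)) (Fin χ(i−1)) ℂ recursively by Y^{[N]} = Σ_σ A^{[N]σ} (A^{[N]σ})ᴴ and Y^{[i]} = Σ_σ A^{[i]σ} (P_i Y^{[i+1]} P_i) (A^{[i]σ})ᴴ for i = N−1, …, 1. Then Σ_σ |Φ(σ)|² = Tr(Y^{[1]}). -/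

import Mathlib

open Matrix

/-- Partial product `A¹ P₁ A² P₂ ⋯ P_{N-1} Aⁱ` (the projector/Hermitian matrix `P j` is
inserted at every interior bond `j = 1, …, N − 1`; the tensor `A i` belongs to site `i + 1`). -/
noncomputable def genWT {d : ℕ} (N : ℕ) (χ : ℕ → ℕ)
    (A : (i : ℕ) → Fin d → Matrix (Fin (χ i)) (Fin (χ (i + 1))) ℂ)
    (P : (i : ℕ) → Matrix (Fin (χ i)) (Fin (χ i)) ℂ) :
    (i : ℕ) → (ℕ → Fin d) → Matrix (Fin (χ 0)) (Fin (χ i)) ℂ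
  | 0, _ => 1
  | (i + 1), σ => genWT N χ A P i σ * A i (σ i) * (if i + 1 < N then P (i + 1) else 1)

/-- `Φ(σ)`: the unique entry (written as the sum of all entries) of the `1 × 1` matrix
`A^{[1]σ(1)} P₁ A^{[2]σ(2)} P₂ ⋯ P_{N−1} A^{[N]σ(N)}` (here `χ 0 = χ N = 1`). -/
noncomputable def genPhi {d : ℕ} [NeZero d] (N : ℕ) (χ : ℕ → ℕ)
    (A : (i : ℕ) → Fin d → Matrix (Fin (χ i)) (Fin (χ (i + 1))) ℂ)
    (P : (i : ℕ) → Matrix (Fin (χ i)) (Fin (χ i)) ℂ)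
    (σ : Fin N → Fin d) : ℂ :=
  ∑ a, ∑ b, genWT N χ A P N (fun k => if h : k < N then σ ⟨k, h⟩ else 0) a b

lemma genWT_congr {d : ℕ} (N : ℕ) (χ : ℕ → ℕ)
    (A : (i : ℕ) → Fin d → Matrix (Fin (χ i)) (Fin (χ (i + 1))) ℂ)
    (P : (i : ℕ) → Matrix (Fin (χ i)) (Fin (χ i)) ℂ)
    (i : ℕ) {σ τ : ℕ → Fin d} (h : ∀ j, j < i → σ j = τ j) :
    genWT N χ A P i σ = genWT N χ A P i τ := by
  induction i with
  | zero => rfl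
  | succ i ih =>
    simp only [genWT]
    rw [ih (fun j hj => h j (Nat.lt_succ_of_lt hj)), h i (Nat.lt_succ_self i)]

/-- transfer-matrix identity, Eqs. (22)–(25) of the paper: the squared
ℓ²-norm of the truncated matrix-product wavefunction `Φ` equals the trace of the iterated
transfer-matrix recursion.  Here `Y j` is the matrix `Y^{[j+1]}` of the paper, living on
bond `j`, so `Y (N-1) = Y^{[N]} = ∑_σ A^{[N]σ} (A^{[N]σ})ᴴ`, the recursion reads
`Y^{[i]} = ∑_σ A^{[i]σ} (P_i Y^{[i+1]} P_i) (A^{[i]σ})ᴴ` for `i = N−1, …, 1`, and the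
conclusion is `∑_σ |Φ(σ)|² = Tr(Y^{[1]}) = Tr(Y 0)`. -/
theorem truncated_mps_norm_eq_trace_of_transfer_recursion
    (N d : ℕ) [NeZero d] (hN : 1 ≤ N)
    (χ : ℕ → ℕ) (hχ0 : χ 0 = 1) (hχN : χ N = 1) (hχpos : ∀ i, 1 ≤ χ i)
    (A : (i : ℕ) → Fin d → Matrix (Fin (χ i)) (Fin (χ (i + 1))) ℂ)
    (P : (i : ℕ) → Matrix (Fin (χ i)) (Fin (χ i)) ℂ)
    (hP : ∀ i, 1 ≤ i → i < N → (P i)ᴴ = P i)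
    (Y : (j : ℕ) → Matrix (Fin (χ j)) (Fin (χ j)) ℂ)
    (hYN : Y (N - 1) = ∑ s : Fin d, A (N - 1) s * (A (N - 1) s)ᴴ)
    (hYrec : ∀ j, j + 1 < N →
      Y j = ∑ s : Fin d, A j s * (P (j + 1) * Y (j + 1) * P (j + 1)) * (A j s)ᴴ) :
    Matrix.trace (Y 0) = ((∑ σ : Fin N → Fin d, ‖genPhi N χ A P σ‖ ^ 2 : ℝ) : ℂ) := by
  classical
  -- key induction
  have key : ∀ k, k ≤ N → Matrix.trace (Y 0) =
      ∑ σ : Fin k → Fin d,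
        Matrix.trace (genWT N χ A P k (fun j => if h : j < k then σ ⟨j, h⟩ else 0) *
          (if k < N then Y k else 1) *
          (genWT N χ A P k (fun j => if h : j < k then σ ⟨j, h⟩ else 0))ᴴ) := by
    intro k
    induction k with
    | zero =>
      intro _
      simp only [genWT]
      rw [Finset.sum_const]
      simp [hN, Nat.lt_of_lt_of_le Nat.zero_lt_one hN]
    | succ k ih =>
      intro hk
      have hk' : k ≤ N := Nat.le_of_succ_le hk
      rw [ih hk']
      rw [← Equiv.sum_comp (Fin.snocEquiv (fun _ => Fin d)), Fintype.sum_prod_type,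
        Finset.sum_comm]
      refine Finset.sum_congr rfl fun τ _ => ?_
      -- rewrite genWT (k+1) of the snoc extension
      have hW : ∀ s : Fin d,
          genWT N χ A P (k + 1)
            (fun j => if h : j < k + 1 then (Fin.snocEquiv (fun _ => Fin d) (s, τ)) ⟨j, h⟩ else 0)
          = genWT N χ A P k (fun j => if h : j < k then τ ⟨j, h⟩ else 0) * A k s *
            (if k + 1 < N then P (k + 1) else 1) := by
        intro s
        simp only [genWT]
        congr 2
        · exact genWT_congr N χ A P k (fun j hj => by
            simp [hj, Nat.lt_succ_of_lt hj, Fin.snocEquiv, Fin.snoc, hj])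
        · simp [Fin.snocEquiv, Fin.snoc]
      simp only [hW]
      set W := genWT N χ A P k (fun j => if h : j < k then τ ⟨j, h⟩ else 0) with hWdef
      set Q : Matrix (Fin (χ (k+1))) (Fin (χ (k+1))) ℂ := if k + 1 < N then P (k + 1) else 1
        with hQ
      have hQH : Qᴴ = Q := by
        rcases lt_or_ge (k+1) N with h | h
        · simp only [hQ, if_pos h]; exact hP (k+1) (Nat.succ_le_succ (Nat.zero_le k)) h
        · simp [hQ, Nat.not_lt.mpr h]
      have hmid : (∑ s : Fin d, A k s * (Q * (if k + 1 < N then Y (k+1) else 1) * Q) * (A k s)ᴴ)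
          = (if k < N then Y k else 1) := by
        rcases lt_or_ge (k+1) N with h | h
        · simp only [hQ, if_pos h, if_pos (Nat.lt_of_succ_lt h)]
          exact (hYrec k h).symm
        · have hkN : k + 1 = N := le_antisymm hk h
          have hk1 : k = N - 1 := by omega
          have hkltN : k < N := by omega
          rw [if_pos hkltN]
          simp only [hQ, if_neg (Nat.not_lt.mpr h)]
          subst hk1
          rw [hYN]
          simp
      symm
      calc ∑ s : Fin d, Matrix.trace (W * A k s * Q *
              (if k + 1 < N then Y (k+1) else 1) * (W * A k s * Q)ᴴ)
          = ∑ s : Fin d, Matrix.trace (W * (A k s *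
              (Q * (if k + 1 < N then Y (k+1) else 1) * Q) * (A k s)ᴴ) * Wᴴ) := by
            refine Finset.sum_congr rfl fun s _ => ?_
            rw [Matrix.conjTranspose_mul, Matrix.conjTranspose_mul, hQH]
            refine congrArg Matrix.trace ?_
            simp only [Matrix.mul_assoc]
        _ = Matrix.trace (W * (∑ s : Fin d,
              A k s * (Q * (if k + 1 < N then Y (k+1) else 1) * Q) * (A k s)ᴴ) * Wᴴ) := by
            rw [Matrix.mul_sum, Matrix.sum_mul, Matrix.trace_sum]
        _ = _ := by rw [hmid]
  have := key N le_rfl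
  rw [this]
  -- now compute the RHS
  haveI u0 : Unique (Fin (χ 0)) := hχ0 ▸ inferInstanceAs (Unique (Fin 1))
  haveI uN : Unique (Fin (χ N)) := hχN ▸ inferInstanceAs (Unique (Fin 1))
  rw [Complex.ofReal_sum]
  refine Finset.sum_congr rfl fun σ _ => ?_
  set W := genWT N χ A P N (fun j => if h : j < N then σ ⟨j, h⟩ else 0) with hWdef
  have hφ : genPhi N χ A P σ = W default default := by
    rw [genPhi, Fintype.sum_unique, Fintype.sum_unique]
  rw [if_neg (lt_irrefl N), Matrix.mul_one]
  rw [Matrix.trace, Fintype.sum_unique, Matrix.diag_apply, Matrix.mul_apply,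
    Fintype.sum_unique, Matrix.conjTranspose_apply, hφ]
  have : star (W default default) = (starRingEnd ℂ) (W default default) := rfl
  rw [this, Complex.mul_conj, Complex.sq_norm]
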